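/- With probability at least 1−δ over uniform initialization W ∈ {±1/k}^{q×k} with q > 2^{k+3}log(2^k/δ), for every k-pattern f (f(x) = g(x_{j*...j*+k}) for some g : {±1}^k → {±1} and index j*), there exist readout vectors u*^{(1)},...,u*^{(n−k)} ∈ R^q with ‖u*^{(j*)}‖ ≤ 2^{k+1}k/√q and u*^{(j)} = 0 for j ≠ j*, such that the depth-2 CNN h_{u*,W,b}(x) = Σ_j ⟨u*^{(j)}, σ(W x_{j...j+k} + b)⟩ equals f(x) for all x ∈ {±1}^n. -/

import Mathlib

open Finset in
lemma neuron_lemma (k : ℕ) (hk : 0 < k) (b p : Fin k → Bool) (z : Fin k → ℝ)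
    (hp : ∀ l, z l = if p l then 1 else -1) :
    max (∑ l : Fin k, (if b l then ((1 : ℝ) / k) else -(1 / k)) * z l + (1 / k - 1)) 0
      = if b = p then (1 : ℝ) / k else 0 := by
  classical
  have hkR : (0:ℝ) < k := by exact_mod_cast hk
  have hterm : ∀ l, (if b l then ((1 : ℝ) / k) else -(1 / k)) * z l
      = if b l = p l then (1:ℝ)/k else -(1/k) := by
    intro l
    rw [hp l]
    cases hb : b l <;> cases hpp : p l <;> simp <;> ring
  rw [Finset.sum_congr rfl (fun l _ => hterm l)]
  rw [Finset.sum_ite, Finset.sum_const, Finset.sum_const]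
  simp only [nsmul_eq_mul]
  set c := (univ.filter (fun l => b l = p l)).card with hc
  set d := (univ.filter (fun l => ¬ b l = p l)).card with hd
  have hcd : c + d = k := by
    rw [hc, hd, Finset.card_filter_add_card_filter_not]
    simp
  by_cases hbp : b = p
  · have hcall : c = k := by
      rw [hc, hbp]
      simp
    have hd0 : d = 0 := by omega
    rw [if_pos hbp, hd0, hcall]
    have h1 : (k:ℝ) * (1/(k:ℝ)) + (0:ℕ) * (-(1/(k:ℝ))) + (1/k - 1) = 1/k := by
      field_simp
      push_cast
      ring
    rw [h1]
    have : (0:ℝ) < 1/k := by positivity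
    exact max_eq_left this.le
  · rw [if_neg hbp]
    have hd1 : 1 ≤ d := by
      rw [hd, Nat.one_le_iff_ne_zero, Ne, Finset.card_eq_zero, ← Ne,
        ← Finset.nonempty_iff_ne_empty]
      obtain ⟨l, hl⟩ : ∃ l, b l ≠ p l := by
        by_contra h
        push_neg at h
        exact hbp (funext h)
      exact ⟨l, by simp [hl]⟩
    apply max_eq_right
    have hcR : (c:ℝ) + d = k := by exact_mod_cast hcd
    have hdR : (1:ℝ) ≤ d := by exact_mod_cast hd1
    have heq : (c:ℝ) * (1/k) + (d:ℝ) * (-(1/k)) + (1/k - 1) = ((1:ℝ) - 2*d)/k := by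
      field_simp
      linarith
    rw [heq]
    exact div_nonpos_of_nonpos_of_nonneg (by linarith) hkR.le

open Finset in
lemma good_implies (n k q : ℕ) (hk : 0 < k) (hq0 : 0 < q) (t : ℕ)
    (s : Fin q → Fin k → Bool)
    (hgood : ∀ p : Fin k → Bool, t ≤ (univ.filter (fun i => s i = p)).card)
    (htq : (q:ℝ) ≤ t * 2^(k+2)) :
    ∀ (g : (Fin k → ℝ) → ℝ) (j' : Fin (n - k)),
      (∀ z : Fin k → ℝ, (∀ l, z l = 1 ∨ z l = -1) → g z = 1 ∨ g z = -1) →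
      ∃ u : Fin (n - k) → Fin q → ℝ,
        Real.sqrt (∑ i, (u j' i) ^ 2) ≤ 2 ^ (k + 1) * k / Real.sqrt q ∧
        (∀ j, j ≠ j' → u j = 0) ∧
        ∀ x : Fin n → ℝ, (∀ i, x i = 1 ∨ x i = -1) →
          (∑ j : Fin (n - k), ∑ i : Fin q, u j i *
              max (∑ l : Fin k,
                  (if s i l then ((1 : ℝ) / k) else -(1 / k)) *
                    x ⟨j.1 + l.1, by have := j.2; have := l.2; omega⟩
                + (1 / k - 1)) 0) =
            g (fun l => x ⟨j'.1 + l.1, by have := j'.2; have := l.2; omega⟩) := by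
  classical
  intro g j' hg
  have ht1 : 1 ≤ t := by
    rcases Nat.eq_zero_or_pos t with h0 | h
    · exfalso
      subst h0
      have hqR : (0:ℝ) < q := by exact_mod_cast hq0
      simp at htq
      linarith
    · exact h
  set ζ : (Fin k → Bool) → (Fin k → ℝ) := fun p l => if p l then 1 else -1 with hζ
  set N : (Fin k → Bool) → ℕ := fun p => (univ.filter (fun i => s i = p)).card with hN
  have hNpos : ∀ p, 0 < N p := fun p => lt_of_lt_of_le ht1 (hgood p)
  have hNne : ∀ p, ((N p : ℝ)) ≠ 0 := fun p => by exact_mod_cast (hNpos p).ne'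
  have hζpm : ∀ p l, ζ p l = 1 ∨ ζ p l = -1 := by
    intro p l
    by_cases h : p l <;> simp [hζ, h]
  have hg2 : ∀ p, (g (ζ p))^2 = 1 := by
    intro p
    rcases hg (ζ p) (hζpm p) with h | h <;> rw [h] <;> norm_num
  set u : Fin (n - k) → Fin q → ℝ :=
    fun j i => if j = j' then (k:ℝ) * g (ζ (s i)) / (N (s i)) else 0 with hu
  have hkR : (0:ℝ) < k := by exact_mod_cast hk
  have hqR : (0:ℝ) < q := by exact_mod_cast hq0
  have htR : (0:ℝ) < t := by exact_mod_cast ht1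
  refine ⟨u, ?_, ?_, ?_⟩
  · -- norm bound
    have hstep1 : ∀ i, (u j' i)^2 = (k:ℝ)^2 / (N (s i))^2 := by
      intro i
      simp only [hu, if_pos rfl]
      rw [div_pow, mul_pow, hg2, mul_one]
    rw [Finset.sum_congr rfl (fun i _ => hstep1 i)]
    have hfib : ∑ i : Fin q, (k:ℝ)^2 / (N (s i))^2
        = ∑ p : Fin k → Bool, (N p : ℝ) * ((k:ℝ)^2 / (N p)^2) := by
      rw [← Finset.sum_fiberwise' univ s (fun p => (k:ℝ)^2 / (N p)^2)]
      congr 1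
      funext p
      rw [Finset.sum_const, nsmul_eq_mul]
    rw [hfib]
    have hterm : ∀ p : Fin k → Bool, (N p : ℝ) * ((k:ℝ)^2 / (N p)^2) ≤ (k:ℝ)^2 / t := by
      intro p
      have h1 : (N p : ℝ) * ((k:ℝ)^2 / (N p)^2) = (k:ℝ)^2 / (N p) := by
        rw [eq_div_iff (hNne p)]
        field_simp
        rw [div_eq_iff (hNne p)]
        ring
      rw [h1]
      apply div_le_div_of_nonneg_left (by positivity) htR
      exact_mod_cast hgood p
    have hsum : ∑ p : Fin k → Bool, (N p : ℝ) * ((k:ℝ)^2 / (N p)^2)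
        ≤ (2^k : ℝ) * ((k:ℝ)^2 / t) := by
      calc ∑ p : Fin k → Bool, (N p : ℝ) * ((k:ℝ)^2 / (N p)^2)
          ≤ ∑ _p : Fin k → Bool, (k:ℝ)^2 / t := Finset.sum_le_sum (fun p _ => hterm p)
        _ = (Fintype.card (Fin k → Bool) : ℝ) * ((k:ℝ)^2 / t) := by
            rw [Finset.sum_const, nsmul_eq_mul]; simp
        _ = (2^k : ℝ) * ((k:ℝ)^2 / t) := by
            simp [Fintype.card_fun]
    have hRHS : ((2:ℝ) ^ (k + 1) * k / Real.sqrt q)^2 = (2:ℝ)^(2*k+2) * (k:ℝ)^2 / q := by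
      rw [div_pow, mul_pow, Real.sq_sqrt hqR.le, ← pow_mul]
      ring_nf
    have hineq : (2^k : ℝ) * ((k:ℝ)^2 / t) ≤ (2:ℝ)^(2*k+2) * (k:ℝ)^2 / q := by
      rw [mul_div_assoc'] at *
      rw [div_le_div_iff₀ htR hqR]
      have h2 : (2:ℝ)^(2*k+2) = 2^k * 2^(k+2) := by
        rw [← pow_add]
        ring_nf
      rw [h2]
      calc (2:ℝ)^k * (k:ℝ)^2 * q ≤ 2^k * (k:ℝ)^2 * (t * 2^(k+2)) := by
            apply mul_le_mul_of_nonneg_left htq (by positivity)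
        _ = 2^k * 2^(k+2) * (k:ℝ)^2 * t := by ring
    calc Real.sqrt (∑ p : Fin k → Bool, (N p : ℝ) * ((k:ℝ)^2 / (N p)^2))
        ≤ Real.sqrt (((2:ℝ) ^ (k + 1) * k / Real.sqrt q)^2) := by
          apply Real.sqrt_le_sqrt
          rw [hRHS]
          exact hsum.trans hineq
      _ = (2:ℝ) ^ (k + 1) * k / Real.sqrt q := Real.sqrt_sq (by positivity)
  · intro j hj
    funext i
    simp [hu, hj]
  · intro x hx
    set z : Fin k → ℝ := fun l => x ⟨j'.1 + l.1, by have := j'.2; have := l.2; omega⟩ with hz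
    set px : Fin k → Bool := fun l => decide (z l = 1) with hpx
    have hzpx : ∀ l, z l = if px l then 1 else -1 := by
      intro l
      show z l = if decide (z l = 1) then 1 else -1
      rcases hx ⟨j'.1 + l.1, by have := j'.2; have := l.2; omega⟩ with h | h
      · have hz1 : z l = 1 := h
        simp [hz1]
      · have hz1 : z l = -1 := h
        norm_num [hz1]
    have hζpx : ζ px = z := by
      funext l
      rw [hζ]
      simp only
      rw [hzpx l]
    rw [Finset.sum_eq_single j']
    · have hmax : ∀ i : Fin q,
          u j' i * max (∑ l : Fin k,
              (if s i l then ((1 : ℝ) / k) else -(1 / k)) *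
                x ⟨j'.1 + l.1, by have := j'.2; have := l.2; omega⟩
            + (1 / k - 1)) 0
          = if s i = px then g (ζ px) / (N px : ℝ) else 0 := by
        intro i
        rw [neuron_lemma k hk (s i) px z (hzpx)]
        by_cases h : s i = px
        · rw [if_pos h, if_pos h]
          simp only [hu, if_pos rfl, h]
          field_simp [hNne px]
        · rw [if_neg h, if_neg h, mul_zero]
      rw [Finset.sum_congr rfl (fun i _ => hmax i)]
      rw [Finset.sum_ite, Finset.sum_const, Finset.sum_const, smul_zero, add_zero,
        nsmul_eq_mul]
      have hcard : ((univ.filter (fun i => s i = px)).card : ℝ) = (N px : ℝ) := by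
        norm_cast
      rw [hcard, mul_div_cancel₀ _ (hNne px), hζpx]
    · intro j _ hj
      apply Finset.sum_eq_zero
      intro i _
      simp [hu, hj]
    · intro h
      exact (h (Finset.mem_univ j')).elim

set_option maxHeartbeats 1000000

open Finset in
lemma count_bad (k q t : ℕ) (p : Fin k → Bool) :
    ((univ.filter (fun s : Fin q → Fin k → Bool =>
        (univ.filter (fun i => s i = p)).card < t)).card : ℝ)
      ≤ 2^t * ((2:ℝ)^k - 1/2)^q := by
  set B := univ.filter (fun s : Fin q → Fin k → Bool =>
      (univ.filter (fun i => s i = p)).card < t) with hB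
  have hprod : ∀ s : Fin q → Fin k → Bool,
      ((1:ℝ)/2)^((univ.filter (fun i => s i = p)).card)
        = ∏ i : Fin q, (if s i = p then (1:ℝ)/2 else 1) := by
    intro s
    rw [Finset.prod_ite, Finset.prod_const, Finset.prod_const, one_pow, mul_one]
  have hperm : ∀ s ∈ B, (1:ℝ) ≤ 2^t * ((1:ℝ)/2)^((univ.filter (fun i => s i = p)).card) := by
    intro s hs
    rw [hB, Finset.mem_filter] at hs
    set c := (univ.filter (fun i => s i = p)).card
    have hct : c ≤ t := hs.2.le
    have h0 : (0:ℝ) < (1/2)^c := by positivity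
    have h1 : (1:ℝ) = 2^c * (1/2)^c := by
      rw [← mul_pow]; norm_num
    calc (1:ℝ) = 2^c * (1/2)^c := h1
      _ ≤ 2^t * (1/2)^c :=
        mul_le_mul_of_nonneg_right (pow_le_pow_right₀ one_le_two hct) h0.le
  have step1 : (B.card : ℝ) ≤ ∑ s ∈ B, 2^t * ((1:ℝ)/2)^((univ.filter (fun i => s i = p)).card) := by
    rw [Finset.card_eq_sum_ones]
    push_cast
    exact Finset.sum_le_sum hperm
  have step2 : ∑ s ∈ B, 2^t * ((1:ℝ)/2)^((univ.filter (fun i => s i = p)).card)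
      ≤ ∑ s : Fin q → Fin k → Bool, 2^t * ((1:ℝ)/2)^((univ.filter (fun i => s i = p)).card) := by
    apply Finset.sum_le_sum_of_subset_of_nonneg (Finset.filter_subset _ _)
    intro s _ _
    positivity
  have step3 : ∑ s : Fin q → Fin k → Bool, 2^t * ((1:ℝ)/2)^((univ.filter (fun i => s i = p)).card)
      = 2^t * ((2:ℝ)^k - 1/2)^q := by
    rw [← Finset.mul_sum]
    congr 1
    calc ∑ s : Fin q → Fin k → Bool, ((1:ℝ)/2)^((univ.filter (fun i => s i = p)).card)
        = ∑ s : Fin q → Fin k → Bool, ∏ i : Fin q, (if s i = p then (1:ℝ)/2 else 1) :=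
          Finset.sum_congr rfl (fun s _ => hprod s)
      _ = (∑ a : Fin k → Bool, (if a = p then (1:ℝ)/2 else 1))^q := (Fintype.sum_pow (fun a : Fin k → Bool => if a = p then (1:ℝ)/2 else 1) q).symm
      _ = ((2:ℝ)^k - 1/2)^q := by
          congr 1
          rw [Finset.sum_ite, Finset.sum_const, Finset.sum_const,
            Finset.filter_eq', if_pos (Finset.mem_univ p), Finset.filter_ne',
            Finset.card_erase_of_mem (Finset.mem_univ p)]
          simp only [Finset.card_singleton, Finset.card_univ, Fintype.card_fun,
            Fintype.card_bool, Fintype.card_fin, smul_eq_mul, nsmul_eq_mul, mul_one,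
            one_smul, one_mul]
          have h2k : 1 ≤ 2^k := Nat.one_le_two_pow
          push_cast [Nat.cast_sub h2k]
          ring
  calc (B.card : ℝ) ≤ _ := step1
    _ ≤ _ := step2
    _ = _ := step3

lemma analytic_bound (k q : ℕ) (δ : ℝ) (hk : 0 < k) (hq0 : 0 < q) (hδ : 0 < δ) (hδ1 : δ < 1)
    (hq : (q : ℝ) > 2 ^ (k + 3) * Real.log (2 ^ k / δ)) :
    (2:ℝ)^k * (2^(q / 2^(k+2) + 1) * ((2:ℝ)^k - 1/2)^q) ≤ δ * ((2:ℝ)^k)^q := by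
  set t : ℕ := q / 2^(k+2) + 1 with ht
  have h2 : (0:ℝ) < 2 := two_pos
  have hlog2 : (0:ℝ) < Real.log 2 := Real.log_pos one_lt_two
  have hlog2le : Real.log 2 ≤ 1 := by
    have := Real.log_le_sub_one_of_pos h2
    linarith
  have hδlog : Real.log δ < 0 := Real.log_neg hδ hδ1
  set L : ℝ := Real.log (2^k / δ) with hLdef
  have hL : L = k * Real.log 2 - Real.log δ := by
    rw [hLdef, Real.log_div (by positivity) hδ.ne', Real.log_pow]
  have hk1 : (1:ℝ) ≤ k := by exact_mod_cast hk
  have hLge : Real.log 2 ≤ L := by nlinarith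
  have hLpos : 0 < L := lt_of_lt_of_le hlog2 hLge
  set Q : ℝ := (q:ℝ) / 2^(k+2) with hQdef
  have h2k2 : (0:ℝ) < 2^(k+2) := by positivity
  have hQ : 2 * L < Q := by
    rw [hQdef, lt_div_iff₀ h2k2]
    have hpk : (2:ℝ)^(k+3) = 2^(k+2) * 2 := by rw [pow_succ]
    nlinarith [hq]
  have htQ : (t:ℝ) ≤ Q + 1 := by
    rw [ht, hQdef]
    push_cast
    have := Nat.cast_div_le (α := ℝ) (m := q) (n := 2^(k+2))
    push_cast at this
    linarith
  have hkey : ((k:ℝ) + t) * Real.log 2 - (q:ℝ)/2^(k+1) ≤ Real.log δ := by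
    have hq21 : (q:ℝ)/2^(k+1) = 2 * Q := by
      rw [hQdef, pow_succ, pow_succ]
      field_simp
      ring
    rw [hq21]
    have hlogδ : Real.log δ = k * Real.log 2 - L := by linarith
    rw [hlogδ]
    have h1 : ((k:ℝ) + t) * Real.log 2 ≤ ((k:ℝ) + Q + 1) * Real.log 2 := by
      apply mul_le_mul_of_nonneg_right _ hlog2.le
      linarith
    have h2' : ((k:ℝ) + Q + 1) * Real.log 2 - 2*Q ≤ (k:ℝ) * Real.log 2 - L := by
      nlinarith [mul_nonneg (sub_nonneg.2 hQ.le) (sub_nonneg.2 (by linarith : Real.log 2 ≤ 2)),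
        mul_nonneg hLpos.le (sub_nonneg.2 hlog2le)]
    linarith
  -- exponential comparisons
  have hpow2 : ∀ m : ℕ, (2:ℝ)^m = Real.exp (m * Real.log 2) := by
    intro m
    rw [Real.exp_nat_mul, Real.exp_log h2]
  have hc1 : (1:ℝ)/2^(k+1) ≤ 1/2 := by
    apply div_le_div_of_nonneg_left one_pos.le two_pos
    calc (2:ℝ) = 2^1 := (pow_one 2).symm
      _ ≤ 2^(k+1) := pow_le_pow_right₀ one_le_two (by omega)
  have hcpos : (0:ℝ) < 1/2^(k+1) := by positivity
  have hbase : (0:ℝ) ≤ 1 - 1/2^(k+1) := by linarith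
  have hexp1 : (1 - 1/2^(k+1) : ℝ) ≤ Real.exp (-(1/2^(k+1))) := by
    have := Real.add_one_le_exp (-(1/2^(k+1) : ℝ))
    linarith
  have hpowq : ((1:ℝ) - 1/2^(k+1))^q ≤ Real.exp (-((q:ℝ)/2^(k+1))) := by
    calc ((1:ℝ) - 1/2^(k+1))^q ≤ Real.exp (-(1/2^(k+1)))^q := pow_le_pow_left₀ hbase hexp1 q
      _ = Real.exp (-((q:ℝ)/2^(k+1))) := by
          rw [← Real.exp_nat_mul]
          congr 1
          ring
  have hsplit : ((2:ℝ)^k - 1/2) = (1 - 1/2^(k+1)) * 2^k := by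
    rw [pow_succ]
    field_simp
  rw [hsplit, mul_pow]
  have hmain : (2:ℝ)^k * (2^t * ((1 - 1/2^(k+1))^q)) ≤ δ := by
    calc (2:ℝ)^k * (2^t * ((1 - 1/2^(k+1))^q))
        ≤ (2:ℝ)^k * (2^t * Real.exp (-((q:ℝ)/2^(k+1)))) := by
          apply mul_le_mul_of_nonneg_left _ (by positivity)
          exact mul_le_mul_of_nonneg_left hpowq (by positivity)
      _ = Real.exp (((k:ℝ) + t) * Real.log 2 - (q:ℝ)/2^(k+1)) := by
          rw [hpow2 k, hpow2 t, ← Real.exp_add, ← Real.exp_add]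
          congr 1
          ring
      _ ≤ Real.exp (Real.log δ) := Real.exp_le_exp.2 hkey
      _ = δ := Real.exp_log hδ
  calc (2:ℝ)^k * (2^t * ((1 - 1/2^(k+1))^q * ((2:ℝ)^k)^q))
      = ((2:ℝ)^k * (2^t * ((1 - 1/2^(k+1))^q))) * ((2:ℝ)^k)^q := by ring
    _ ≤ δ * ((2:ℝ)^k)^q := mul_le_mul_of_nonneg_right hmain (by positivity)

open Classical in
/-- With probability ≥ 1-δ over a uniform initialization `W ∈ {±1/k}^{q×k}` (encoded by
sign patterns `s : Fin q → Fin k → Bool`, with `W i l = 1/k` if `s i l` else `-1/k`),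
when `q > 2^{k+3} log(2^k/δ)`: for every k-pattern `f(x) = g(x_{j'...j'+k})` there are
readout vectors `u^{(1)},...,u^{(n-k)} ∈ ℝ^q` with `‖u^{(j')}‖ ≤ 2^{k+1} k / √q` and
`u^{(j)} = 0` for `j ≠ j'`, such that the depth-2 ReLU CNN with biases `b_i = 1/k - 1`
computes `f` exactly on `{±1}^n`. -/
theorem stmt_4 (n k q : ℕ) (hk : 0 < k) (hkn : k ≤ n) (hq0 : 0 < q)
    (δ : ℝ) (hδ : 0 < δ) (hδ1 : δ < 1)
    (hq : (q : ℝ) > 2 ^ (k + 3) * Real.log (2 ^ k / δ)) :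
    (1 : ℝ) - δ ≤
      ((Finset.univ.filter (fun s : Fin q → Fin k → Bool =>
          ∀ (g : (Fin k → ℝ) → ℝ) (j' : Fin (n - k)),
            (∀ z : Fin k → ℝ, (∀ l, z l = 1 ∨ z l = -1) → g z = 1 ∨ g z = -1) →
            ∃ u : Fin (n - k) → Fin q → ℝ,
              Real.sqrt (∑ i, (u j' i) ^ 2) ≤ 2 ^ (k + 1) * k / Real.sqrt q ∧
              (∀ j, j ≠ j' → u j = 0) ∧
              ∀ x : Fin n → ℝ, (∀ i, x i = 1 ∨ x i = -1) →
                (∑ j : Fin (n - k), ∑ i : Fin q, u j i *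
                    max (∑ l : Fin k,
                        (if s i l then ((1 : ℝ) / k) else -(1 / k)) *
                          x ⟨j.1 + l.1, by have := j.2; have := l.2; omega⟩
                      + (1 / k - 1)) 0) =
                  g (fun l => x ⟨j'.1 + l.1, by have := j'.2; have := l.2; omega⟩))).card : ℝ)
        / (Fintype.card (Fin q → Fin k → Bool) : ℝ) := by
  classical
  set t : ℕ := q / 2^(k+2) + 1 with ht
  set S := (Finset.univ.filter (fun s : Fin q → Fin k → Bool =>
          ∀ (g : (Fin k → ℝ) → ℝ) (j' : Fin (n - k)),
            (∀ z : Fin k → ℝ, (∀ l, z l = 1 ∨ z l = -1) → g z = 1 ∨ g z = -1) →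
            ∃ u : Fin (n - k) → Fin q → ℝ,
              Real.sqrt (∑ i, (u j' i) ^ 2) ≤ 2 ^ (k + 1) * k / Real.sqrt q ∧
              (∀ j, j ≠ j' → u j = 0) ∧
              ∀ x : Fin n → ℝ, (∀ i, x i = 1 ∨ x i = -1) →
                (∑ j : Fin (n - k), ∑ i : Fin q, u j i *
                    max (∑ l : Fin k,
                        (if s i l then ((1 : ℝ) / k) else -(1 / k)) *
                          x ⟨j.1 + l.1, by have := j.2; have := l.2; omega⟩
                      + (1 / k - 1)) 0) =
                  g (fun l => x ⟨j'.1 + l.1, by have := j'.2; have := l.2; omega⟩))) with hS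
  set Good := (Finset.univ.filter (fun s : Fin q → Fin k → Bool =>
      ∀ p : Fin k → Bool, t ≤ (Finset.univ.filter (fun i => s i = p)).card)) with hGood
  have htq : (q:ℝ) ≤ (t:ℝ) * 2^(k+2) := by
    have h2 : 0 < 2^(k+2) := Nat.pow_pos (by norm_num)
    have h1 : q ≤ t * 2^(k+2) := by
      rw [ht]
      calc q = 2^(k+2) * (q / 2^(k+2)) + q % 2^(k+2) := (Nat.div_add_mod q _).symm
        _ ≤ 2^(k+2) * (q / 2^(k+2)) + 2^(k+2) := by
            have := Nat.mod_lt q h2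
            omega
        _ = (q / 2^(k+2) + 1) * 2^(k+2) := by ring
    have hc := (Nat.cast_le (α := ℝ)).2 h1
    rw [ht]
    rw [ht] at hc
    push_cast at hc ⊢
    linarith
  -- Good ⊆ S
  have hsub : Good ⊆ S := by
    intro s hs
    rw [hGood, Finset.mem_filter] at hs
    rw [hS, Finset.mem_filter]
    exact ⟨Finset.mem_univ s, good_implies n k q hk hq0 t s hs.2 htq⟩
  -- bound on the bad set
  set Bad := (Finset.univ.filter (fun s : Fin q → Fin k → Bool =>
      ¬ ∀ p : Fin k → Bool, t ≤ (Finset.univ.filter (fun i => s i = p)).card)) with hBad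
  have hGB : Good.card + Bad.card = Fintype.card (Fin q → Fin k → Bool) := by
    rw [hGood, hBad, Finset.card_filter_add_card_filter_not, Finset.card_univ]
  have hBadsub : Bad ⊆ Finset.univ.biUnion (fun p : Fin k → Bool =>
      Finset.univ.filter (fun s : Fin q → Fin k → Bool =>
        (Finset.univ.filter (fun i => s i = p)).card < t)) := by
    intro s hs
    rw [hBad, Finset.mem_filter] at hs
    push_neg at hs
    obtain ⟨p, hp⟩ := hs.2
    rw [Finset.mem_biUnion]
    exact ⟨p, Finset.mem_univ p, Finset.mem_filter.2 ⟨Finset.mem_univ s, hp⟩⟩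
  have hBadcard : (Bad.card : ℝ) ≤ (2:ℝ)^k * (2^t * ((2:ℝ)^k - 1/2)^q) := by
    have h1 : Bad.card ≤ ∑ p : Fin k → Bool,
        (Finset.univ.filter (fun s : Fin q → Fin k → Bool =>
          (Finset.univ.filter (fun i => s i = p)).card < t)).card :=
      le_trans (Finset.card_le_card hBadsub) (Finset.card_biUnion_le)
    have h2 : ((Bad.card : ℝ)) ≤ ∑ p : Fin k → Bool,
        ((Finset.univ.filter (fun s : Fin q → Fin k → Bool =>
          (Finset.univ.filter (fun i => s i = p)).card < t)).card : ℝ) := by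
      exact_mod_cast h1
    calc (Bad.card : ℝ) ≤ _ := h2
      _ ≤ ∑ _p : Fin k → Bool, (2:ℝ)^t * ((2:ℝ)^k - 1/2)^q :=
          Finset.sum_le_sum (fun p _ => count_bad k q t p)
      _ = (2:ℝ)^k * (2^t * ((2:ℝ)^k - 1/2)^q) := by
          rw [Finset.sum_const, nsmul_eq_mul, Finset.card_univ]
          simp [Fintype.card_fun]
  have hcardU : ((Fintype.card (Fin q → Fin k → Bool) : ℕ) : ℝ) = ((2:ℝ)^k)^q := by
    have hcn : Fintype.card (Fin q → Fin k → Bool) = (2^k)^q := by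
      simp [Fintype.card_fun]
    rw [hcn]
    push_cast
    ring
  have hUpos : (0:ℝ) < ((2:ℝ)^k)^q := by positivity
  have hBadδ : (Bad.card : ℝ) ≤ δ * ((2:ℝ)^k)^q :=
    le_trans hBadcard (analytic_bound k q δ hk hq0 hδ hδ1 hq)
  rw [hcardU, le_div_iff₀ hUpos]
  have hScard : (Good.card : ℝ) ≤ (S.card : ℝ) := by
    exact_mod_cast Finset.card_le_card hsub
  have hGB' : (Good.card : ℝ) + (Bad.card : ℝ)
      = ((Fintype.card (Fin q → Fin k → Bool) : ℕ) : ℝ) := by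
    exact_mod_cast hGB
  rw [hcardU] at hGB'
  nlinarith [hScard, hGB', hBadδ, hUpos]
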